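/- Let A ⊆ X be a subspace and let M̄ = X ∪_{A×{0}} (A × [0,1]) be the mapping cylinder of the inclusion A ↪ X. Suppose {φ^t : X → X}_{t∈[0,1]} is a continuous family of maps with φ^0 = id, each φ^t(A) ⊆ X, and φ^1(A) ⊆ A. Define θ : M̄ → M̄ by θ(x) = x for x ∈ X and θ(a,t) = (φ^t(a), t) on the cylinder (interpreting φ^t(a) ∈ X when needed via the identification). Then θ is homotopic to the map induced by φ^1 as maps of pairs (M̄, A × {1}) → (M̄, A × {1}), via the homotopy H(x,s) = φ^s(x) on X and H(a,t,s) = (φ^{min(s+t,1)}(a), t) on A × [0,1]. -/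

import Mathlib

open unitInterval

/-- The mapping cylinder of the inclusion `A ↪ X`: the quotient of `X ⊔ (A × [0,1])`
identifying `a ∼ (a, 0)`. -/
def MappingCyl {X : Type*} [TopologicalSpace X] (A : Set X) : Type _ :=
  Quot (fun p q : X ⊕ (A × unitInterval) =>
    ∃ a : A, p = Sum.inl (a : X) ∧ q = Sum.inr (a, 0))

instance {X : Type*} [TopologicalSpace X] (A : Set X) : TopologicalSpace (MappingCyl A) :=
  instTopologicalSpaceQuot

/-- Given a continuous family `φ^t : X → X` with `φ^0 = id` and `φ^t(A) ⊆ A`, the map `θ`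
of the mapping cylinder `M̄ = X ∪_{A×{0}} (A × [0,1])` given by the identity on `X` and
`(a,t) ↦ (φ^t a, t)` on the cylinder is homotopic, as a map of pairs
`(M̄, A × {1}) → (M̄, A × {1})`, to the map `Φ` induced by `φ^1`, via the homotopy
`H(x,s) = φ^s(x)` on `X` and `H(a,t,s) = (φ^{min(s+t,1)} a, t)` on the cylinder. -/
theorem stmt6 {X : Type*} [TopologicalSpace X] (A : Set X)
    (φ : C(unitInterval × X, X))
    (hφ0 : ∀ x : X, φ (0, x) = x)
    (hφA : ∀ (t : unitInterval) (x : X), x ∈ A → φ (t, x) ∈ A) :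
    ∃ θ Φ : C(MappingCyl A, MappingCyl A),
      (∀ x : X, θ (Quot.mk _ (Sum.inl x)) = Quot.mk _ (Sum.inl x)) ∧
      (∀ (a : A) (t : unitInterval),
        θ (Quot.mk _ (Sum.inr (a, t))) = Quot.mk _ (Sum.inr (⟨φ (t, a), hφA t a a.2⟩, t))) ∧
      (∀ x : X, Φ (Quot.mk _ (Sum.inl x)) = Quot.mk _ (Sum.inl (φ (1, x)))) ∧
      (∀ (a : A) (t : unitInterval),
        Φ (Quot.mk _ (Sum.inr (a, t))) = Quot.mk _ (Sum.inr (⟨φ (1, a), hφA 1 a a.2⟩, t))) ∧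
      ∃ H : C(MappingCyl A × unitInterval, MappingCyl A),
        (∀ m : MappingCyl A, H (m, 0) = θ m) ∧
        (∀ m : MappingCyl A, H (m, 1) = Φ m) ∧
        (∀ (x : X) (s : unitInterval),
          H (Quot.mk _ (Sum.inl x), s) = Quot.mk _ (Sum.inl (φ (s, x)))) ∧
        (∀ (a : A) (t s : unitInterval),
          H (Quot.mk _ (Sum.inr (a, t)), s) =
            Quot.mk _ (Sum.inr
              (⟨φ (⟨min ((s : ℝ) + (t : ℝ)) 1,
                  ⟨le_min (add_nonneg s.2.1 t.2.1) zero_le_one, min_le_right _ _⟩⟩, a),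
                hφA _ a a.2⟩, t))) ∧
        (∀ (a : A) (s : unitInterval),
          ∃ b : A, H (Quot.mk _ (Sum.inr (a, 1)), s) = Quot.mk _ (Sum.inr (b, 1))) := by
  classical
  have hq : Continuous (Quot.mk _ : X ⊕ (A × unitInterval) → MappingCyl A) :=
    continuous_quot_mk
  -- min(s+t,1) as an element of I
  let mn : unitInterval → unitInterval → unitInterval := fun s t =>
    ⟨min ((s : ℝ) + (t : ℝ)) 1,
      ⟨le_min (add_nonneg s.2.1 t.2.1) zero_le_one, min_le_right _ _⟩⟩
  have hmn : Continuous fun p : unitInterval × unitInterval => mn p.1 p.2 := by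
    apply Continuous.subtype_mk
    fun_prop
  -- piece on X
  let gX : C(X × unitInterval, MappingCyl A) :=
    ⟨fun p => Quot.mk _ (Sum.inl (φ (p.2, p.1))), by
      exact hq.comp (continuous_inl.comp (φ.continuous.comp (by fun_prop)))⟩
  -- piece on cylinder
  let gC : C((A × unitInterval) × unitInterval, MappingCyl A) :=
    ⟨fun p => Quot.mk _ (Sum.inr
        (⟨φ (mn p.2 p.1.2, p.1.1), hφA _ _ p.1.1.2⟩, p.1.2)), by
      apply hq.comp
      apply continuous_inr.comp
      apply Continuous.prodMk
      · apply Continuous.subtype_mk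
        apply φ.continuous.comp
        apply Continuous.prodMk
        · exact hmn.comp ((continuous_snd.prodMk (continuous_snd.comp continuous_fst)))
        · exact continuous_subtype_val.comp (continuous_fst.comp continuous_fst)
      · exact continuous_snd.comp continuous_fst⟩
  -- descend to the quotient, curried
  let f : X ⊕ (A × unitInterval) → C(unitInterval, MappingCyl A) :=
    Sum.elim gX.curry gC.curry
  have hf : ∀ p q, (fun p q : X ⊕ (A × unitInterval) =>
      ∃ a : A, p = Sum.inl (a : X) ∧ q = Sum.inr (a, 0)) p q → f p = f q := by
    rintro p q ⟨a, rfl, rfl⟩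
    ext s
    simp only [f, Sum.elim_inl, Sum.elim_inr, ContinuousMap.curry_apply, gX, gC,
      ContinuousMap.coe_mk]
    have h1 : mn s 0 = s := by
      apply Subtype.ext
      simp [mn, min_eq_left s.2.2]
    change (Quot.mk _ (Sum.inl (φ (s, (a : X)))) : MappingCyl A) =
      Quot.mk _ (Sum.inr (⟨φ (mn s 0, a), hφA _ a a.2⟩, 0))
    rw [h1]
    exact Quot.sound ⟨⟨φ (s, a), hφA s a a.2⟩, rfl, rfl⟩
  let Fc : C(MappingCyl A, C(unitInterval, MappingCyl A)) :=
    ⟨Quot.lift f hf, by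
      exact continuous_quot_lift _ (Continuous.sumElim gX.curry.continuous gC.curry.continuous)⟩
  let H : C(MappingCyl A × unitInterval, MappingCyl A) := Fc.uncurry
  have HX : ∀ (x : X) (s : unitInterval),
      H (Quot.mk _ (Sum.inl x), s) = Quot.mk _ (Sum.inl (φ (s, x))) := fun x s => by
    have e1 : Fc (Quot.mk _ (Sum.inl x)) = f (Sum.inl x) := rfl
    have e2 : H (Quot.mk _ (Sum.inl x), s) = Fc (Quot.mk _ (Sum.inl x)) s := rfl
    have e3 : f (Sum.inl x) s = Quot.mk _ (Sum.inl (φ (s, x))) := rfl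
    rw [e2, e1, e3]
  have HC : ∀ (a : A) (t s : unitInterval),
      H (Quot.mk _ (Sum.inr (a, t)), s) =
        Quot.mk _ (Sum.inr (⟨φ (mn s t, a), hφA _ a a.2⟩, t)) := fun a t s => by
    have e1 : Fc (Quot.mk _ (Sum.inr (a, t))) = f (Sum.inr (a, t)) := rfl
    have e2 : H (Quot.mk _ (Sum.inr (a, t)), s) = Fc (Quot.mk _ (Sum.inr (a, t))) s := rfl
    have e3 : f (Sum.inr (a, t)) s =
        Quot.mk _ (Sum.inr (⟨φ (mn s t, a), hφA _ a a.2⟩, t)) := rfl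
    rw [e2, e1, e3]
  refine ⟨H.comp ⟨fun m => (m, 0), by fun_prop⟩, H.comp ⟨fun m => (m, 1), by fun_prop⟩,
    ?_, ?_, ?_, ?_, H, fun m => rfl, fun m => rfl, HX, HC, ?_⟩
  · intro x
    change H (Quot.mk _ (Sum.inl x), 0) = _
    rw [HX, hφ0]
  · intro a t
    change H (Quot.mk _ (Sum.inr (a, t)), 0) = _
    rw [HC]
    have h : mn 0 t = t := Subtype.ext (by simp [mn, min_eq_left t.2.2])
    rw [h]
  · intro x
    change H (Quot.mk _ (Sum.inl x), 1) = _
    rw [HX]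
  · intro a t
    change H (Quot.mk _ (Sum.inr (a, t)), 1) = _
    rw [HC]
    have h : mn 1 t = 1 := Subtype.ext (by
      have : (1 : ℝ) ≤ 1 + (t : ℝ) := le_add_of_nonneg_right t.2.1
      simp [mn, min_eq_right this])
    rw [h]
  · intro a s
    exact ⟨⟨φ (mn s 1, a), hφA _ a a.2⟩, HC a 1 s⟩
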